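/- Discrete anti-self-duality of ē ∪ e: with e = Σ_k (e₁^k + e₂^k 𝐢 + e₃^k 𝐣 + e₄^k 𝐤), the 2-form ē ∪ e equals 2[(ε₁₂-ε₃₄)𝐢 + (ε₁₃+ε₂₄)𝐣 + (ε₁₄-ε₂₃)𝐤], and it is anti-self-dual: ∗ι̃(ē ∪ e) = -(ē ∪ e). -/

import Mathlib

/-- The quaternionic units `1, 𝐢, 𝐣, 𝐤` appearing as the coefficients of the
1-form `e = e₁ + e₂𝐢 + e₃𝐣 + e₄𝐤`. -/
noncomputable def qu : Fin 4 → Quaternion ℝ :=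
  ![1, ⟨0, 1, 0, 0⟩, ⟨0, 0, 1, 0⟩, ⟨0, 0, 0, 1⟩]

/-- The quaternionic component of the 2-form `ē ∪ e` on `ε_{ij}` (`i < j`):
since `e_i ∪ e_j = ε_{ij}` and `e_j ∪ e_i = -ε_{ij}`, it is
`conj(u_i)·u_j - conj(u_j)·u_i`. -/
noncomputable def ebarCupE (i j : Fin 4) : Quaternion ℝ :=
  star (qu i) * qu j - star (qu j) * qu i

/-- Discrete anti-self-duality of `ē ∪ e`: the 2-form `ē ∪ e` equals
`2[(ε₁₂-ε₃₄)𝐢 + (ε₁₃+ε₂₄)𝐣 + (ε₁₄-ε₂₃)𝐤]`, i.e. its components are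
`F^{12} = 2𝐢`, `F^{34} = -2𝐢`, `F^{13} = F^{24} = 2𝐣`, `F^{14} = 2𝐤`,
`F^{23} = -2𝐤`, and these satisfy the anti-self-duality relations
`∗ι̃(ē ∪ e) = -(ē ∪ e)`, i.e. `F^{12} = -F^{34}`, `F^{13} = F^{24}`,
`F^{14} = -F^{23}`. -/
theorem ebarCupE_antiSelfDual :
    (ebarCupE 0 1 = ⟨0, 2, 0, 0⟩ ∧ ebarCupE 2 3 = ⟨0, -2, 0, 0⟩ ∧
     ebarCupE 0 2 = ⟨0, 0, 2, 0⟩ ∧ ebarCupE 1 3 = ⟨0, 0, 2, 0⟩ ∧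
     ebarCupE 0 3 = ⟨0, 0, 0, 2⟩ ∧ ebarCupE 1 2 = ⟨0, 0, 0, -2⟩) ∧
    (ebarCupE 0 1 = - ebarCupE 2 3 ∧ ebarCupE 0 2 = ebarCupE 1 3 ∧
     ebarCupE 0 3 = - ebarCupE 1 2) := by
  unfold ebarCupE qu
  simp only [Matrix.cons_val_zero, Matrix.cons_val_one, Matrix.head_cons,
    Matrix.cons_val_two, Matrix.cons_val_three, Matrix.tail_cons]
  obtain ⟨qi, hi⟩ : ∃ q : Quaternion ℝ, q = ⟨0, 1, 0, 0⟩ := ⟨_, rfl⟩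
  obtain ⟨qj, hj⟩ : ∃ q : Quaternion ℝ, q = ⟨0, 0, 1, 0⟩ := ⟨_, rfl⟩
  obtain ⟨qk, hk⟩ : ∃ q : Quaternion ℝ, q = ⟨0, 0, 0, 1⟩ := ⟨_, rfl⟩
  rw [← hi, ← hj, ← hk]
  have hi' : qi.re = 0 ∧ qi.imI = 1 ∧ qi.imJ = 0 ∧ qi.imK = 0 := by subst hi; simp
  have hj' : qj.re = 0 ∧ qj.imI = 0 ∧ qj.imJ = 1 ∧ qj.imK = 0 := by subst hj; simp
  have hk' : qk.re = 0 ∧ qk.imI = 0 ∧ qk.imJ = 0 ∧ qk.imK = 1 := by subst hk; simp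
  clear hi hj hk
  refine ⟨⟨?_, ?_, ?_, ?_, ?_, ?_⟩, ?_, ?_, ?_⟩ <;>
    ext <;>
    simp [Quaternion.ext_iff, QuaternionAlgebra.ext_iff, hi', hj', hk'] <;> ring
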